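/- Let σ₁ = !![0,1; 1,0], σ₂ = !![0,−i; i,0], σ₃ = !![1,0; 0,−1] and let V = exp(i(π/3)(σ₁ + σ₂ + σ₃)/√3) (matrix exponential of a 2×2 complex matrix). Then ⟨e₀, V e₀⟩ = (1+i)/2, where e₀ = (1,0); consequently ⟨e₀^{⊗N}, V^{⊗N} e₀^{⊗N}⟩ = ((1+i)/2)^N = 2^{−N/2}·exp(iπN/4) for every natural number N, and exp(iπN/4) = 1 if and only if N ≡ 0 (mod 8). -/

import Mathlib

open Matrix

/-- The `N`-fold Kronecker (tensor) power of a `2×2` matrix, as a matrix indexed by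
`Fin N → Fin 2`. -/
noncomputable def kronPow (N : ℕ) (U : Matrix (Fin 2) (Fin 2) ℂ) :
    Matrix (Fin N → Fin 2) (Fin N → Fin 2) ℂ :=
  fun x y => ∏ i, U (x i) (y i)

/-- The `N`-fold tensor power of a vector in `ℂ²`. -/
noncomputable def vecPow (N : ℕ) (v : Fin 2 → ℂ) : (Fin N → Fin 2) → ℂ :=
  fun x => ∏ i, v (x i)

/- Auxiliary material -/
noncomputable def sC : ℂ := (Real.sqrt 3 : ℂ)

noncomputable def Pm : Matrix (Fin 2) (Fin 2) ℂ :=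
  !![1 - Complex.I, 1 - Complex.I; sC - 1, -sC - 1]

noncomputable def dv : Fin 2 → ℂ :=
  ![Complex.I * ((Real.pi : ℂ)/3), -(Complex.I * ((Real.pi : ℂ)/3))]

lemma hsne : sC ≠ 0 := by
  rw [sC]
  exact_mod_cast (Real.sqrt_pos.mpr (by norm_num : (0:ℝ) < 3)).ne'

lemma hs2 : sC ^ 2 = 3 := by
  rw [sC, ← Complex.ofReal_pow, Real.sq_sqrt (by norm_num : (3:ℝ) ≥ 0)]; norm_num

lemma hIne : (1 : ℂ) - Complex.I ≠ 0 := by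
  intro h; have := congrArg Complex.im h; simp at this

lemma hPdet : IsUnit Pm.det := by
  have : Pm.det = (1 - Complex.I) * (-2 * sC) := by
    simp [Pm, Matrix.det_fin_two_of]; ring
  rw [this, isUnit_iff_ne_zero]
  exact mul_ne_zero hIne (by simpa using hsne)

lemma hPunit : IsUnit Pm := (Matrix.isUnit_iff_isUnit_det Pm).mpr hPdet

lemma key :
    ((Complex.I * ((Real.pi : ℂ) / 3) / (Real.sqrt 3 : ℂ)) •
      (!![1, (1:ℂ) - Complex.I; 1 + Complex.I, -1])) * Pm
      = Pm * Matrix.diagonal dv := by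
  have h3 := hs2
  have hne := hsne
  ext i j
  fin_cases i <;> fin_cases j <;>
    simp [Pm, dv, sC, Matrix.mul_apply, Fin.sum_univ_two, Matrix.diagonal] <;>
    rw [show (Real.sqrt 3 : ℂ) = sC from rfl] <;>
    field_simp
  · ring
  · ring
  · linear_combination (-1)*h3 + (-1)*Complex.I_sq
  · linear_combination (-1)*h3 + (-1)*Complex.I_sq


/-- For `V = exp(i(π/3)(σ₁+σ₂+σ₃)/√3)` one has `⟨e₀, V e₀⟩ = (1+i)/2`; consequently
`⟨e₀^{⊗N}, V^{⊗N} e₀^{⊗N}⟩ = ((1+i)/2)^N = 2^{−N/2}·exp(iπN/4)` for all `N`, and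
`exp(iπN/4) = 1` iff `N ≡ 0 (mod 8)`. -/
theorem tetrahedral_generator_Gone_matrix_element
    (σ₁ σ₂ σ₃ : Matrix (Fin 2) (Fin 2) ℂ)
    (hσ₁ : σ₁ = !![0, 1; 1, 0]) (hσ₂ : σ₂ = !![0, -Complex.I; Complex.I, 0])
    (hσ₃ : σ₃ = !![1, 0; 0, -1])
    (V : Matrix (Fin 2) (Fin 2) ℂ)
    (hV : V = NormedSpace.exp
      ((Complex.I * ((Real.pi : ℂ) / 3) / (Real.sqrt 3 : ℂ)) • (σ₁ + σ₂ + σ₃)))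
    (e₀ : Fin 2 → ℂ) (he₀ : e₀ = ![1, 0]) :
    star e₀ ⬝ᵥ (V *ᵥ e₀) = (1 + Complex.I) / 2 ∧
    ∀ N : ℕ,
      star (vecPow N e₀) ⬝ᵥ (kronPow N V *ᵥ vecPow N e₀) = ((1 + Complex.I) / 2) ^ N ∧
      ((1 + Complex.I) / 2) ^ N
        = ((Real.sqrt 2 : ℂ))⁻¹ ^ N * Complex.exp (Complex.I * Real.pi * N / 4) ∧
      (Complex.exp (Complex.I * Real.pi * N / 4) = 1 ↔ N % 8 = 0) := by
  have hπ : (Real.pi : ℂ) ≠ 0 := by exact_mod_cast Real.pi_ne_zero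
  -- the sum of the Pauli matrices
  have hM : σ₁ + σ₂ + σ₃ = !![1, (1:ℂ) - Complex.I; 1 + Complex.I, -1] := by
    subst hσ₁ hσ₂ hσ₃
    ext i j
    fin_cases i <;> fin_cases j <;> simp <;> ring
  -- diagonalization
  have hA : (Complex.I * ((Real.pi : ℂ) / 3) / (Real.sqrt 3 : ℂ)) • (σ₁ + σ₂ + σ₃)
      = Pm * Matrix.diagonal dv * Pm⁻¹ := by
    rw [hM, ← key, Matrix.mul_assoc, Matrix.mul_nonsing_inv _ hPdet, Matrix.mul_one]
  have hVE : V = Pm * Matrix.diagonal (fun i => Complex.exp (dv i)) * Pm⁻¹ := by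
    have hexp : NormedSpace.exp dv = fun i => Complex.exp (dv i) := by
      funext i
      rw [Pi.coe_exp]
      exact (congrFun Complex.exp_eq_exp_ℂ (dv i)).symm
    rw [hV, hA, Matrix.exp_conj Pm _ hPunit, Matrix.exp_diagonal, hexp]
  have hVP : V * Pm = Pm * Matrix.diagonal (fun i => Complex.exp (dv i)) := by
    rw [hVE, Matrix.mul_assoc, Matrix.nonsing_inv_mul _ hPdet, Matrix.mul_one]
  -- exponential values
  have hcos : Complex.cos ((Real.pi:ℂ)/3) = 1/2 := by
    rw [show ((Real.pi:ℂ)/3) = ((Real.pi/3 : ℝ) : ℂ) by push_cast; ring,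
      ← Complex.ofReal_cos, Real.cos_pi_div_three]; norm_num
  have hsin : Complex.sin ((Real.pi:ℂ)/3) = sC/2 := by
    rw [show ((Real.pi:ℂ)/3) = ((Real.pi/3 : ℝ) : ℂ) by push_cast; ring,
      ← Complex.ofReal_sin, Real.sin_pi_div_three, sC]; push_cast; ring
  have ha : Complex.exp (dv 0) = 1/2 + sC/2 * Complex.I := by
    show Complex.exp (Complex.I * ((Real.pi : ℂ)/3)) = _
    rw [mul_comm, Complex.exp_mul_I, hcos, hsin]
  have hb : Complex.exp (dv 1) = 1/2 - sC/2 * Complex.I := by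
    show Complex.exp (-(Complex.I * ((Real.pi : ℂ)/3))) = _
    rw [show -(Complex.I * ((Real.pi : ℂ)/3)) = (-((Real.pi:ℂ)/3)) * Complex.I by ring,
      Complex.exp_mul_I, Complex.cos_neg, Complex.sin_neg, hcos, hsin]
    ring
  -- the key matrix element
  have hV00 : V 0 0 = (1 + Complex.I) / 2 := by
    have e1 := congrFun (congrFun hVP 0) 0
    have e2 := congrFun (congrFun hVP 0) 1
    simp [Pm, Matrix.mul_apply, Fin.sum_univ_two, Matrix.diagonal, ha, hb] at e1 e2
    have hcancel : ((1:ℂ) - Complex.I) * (2 * sC) ≠ 0 :=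
      mul_ne_zero hIne (mul_ne_zero two_ne_zero hsne)
    apply mul_left_cancel₀ hcancel
    linear_combination (sC + 1) * e1 + (sC - 1) * e2
  have part1 : star e₀ ⬝ᵥ (V *ᵥ e₀) = (1 + Complex.I) / 2 := by
    subst he₀
    simp [dotProduct, Matrix.mulVec, Fin.sum_univ_two, hV00]
  refine ⟨part1, fun N => ⟨?_, ?_, ?_⟩⟩
  · -- tensor power matrix element
    have hv : vecPow N e₀ = Pi.single (fun _ => (0 : Fin 2)) 1 := by
      funext x
      by_cases h : x = fun _ => 0
      · subst h; simp [vecPow, he₀, Pi.single_apply]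
      · rw [Pi.single_apply, if_neg h]
        obtain ⟨i, hi⟩ := Function.ne_iff.mp h
        refine Finset.prod_eq_zero (Finset.mem_univ i) ?_
        have : x i = 1 := by omega
        simp [he₀, this]
    have hstar : star (vecPow N e₀) = vecPow N e₀ := by
      rw [hv]; funext x
      simp [Pi.star_apply, Pi.single_apply, apply_ite]
    rw [hstar, hv]
    rw [single_dotProduct]
    rw [Matrix.mulVec, dotProduct_single]
    simp only [one_mul, mul_one]
    show kronPow N V (fun _ => 0) (fun _ => 0) = _
    rw [kronPow]
    simp [hV00, Finset.prod_const]
    rw [div_pow]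
  · -- rewriting the power
    have h2ne : (Real.sqrt 2 : ℂ) ≠ 0 := by
      exact_mod_cast (Real.sqrt_pos.mpr (by norm_num : (0:ℝ) < 2)).ne'
    have h22 : (Real.sqrt 2 : ℂ) ^ 2 = 2 := by
      rw [← Complex.ofReal_pow, Real.sq_sqrt (by norm_num : (2:ℝ) ≥ 0)]; norm_num
    have hcos4 : Complex.cos ((Real.pi:ℂ)/4) = (Real.sqrt 2 : ℂ)/2 := by
      rw [show ((Real.pi:ℂ)/4) = ((Real.pi/4 : ℝ) : ℂ) by push_cast; ring,
        ← Complex.ofReal_cos, Real.cos_pi_div_four]; push_cast; ring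
    have hsin4 : Complex.sin ((Real.pi:ℂ)/4) = (Real.sqrt 2 : ℂ)/2 := by
      rw [show ((Real.pi:ℂ)/4) = ((Real.pi/4 : ℝ) : ℂ) by push_cast; ring,
        ← Complex.ofReal_sin, Real.sin_pi_div_four]; push_cast; ring
    have base : (1 + Complex.I)/2
        = (Real.sqrt 2 : ℂ)⁻¹ * Complex.exp (Complex.I * Real.pi / 4) := by
      rw [show Complex.I * (Real.pi : ℂ) / 4 = ((Real.pi:ℂ)/4) * Complex.I by ring,
        Complex.exp_mul_I, hcos4, hsin4]
      field_simp
    rw [base, mul_pow]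
    congr 1
    rw [← Complex.exp_nat_mul]
    congr 1
    push_cast; ring
  · -- periodicity
    rw [Complex.exp_eq_one_iff]
    constructor
    · rintro ⟨n, hn⟩
      have h2 : Complex.I * (Real.pi : ℂ) * (N : ℂ)
          = Complex.I * (Real.pi : ℂ) * (8 * (n : ℂ)) := by
        linear_combination 4 * hn
      have h3 : (N : ℂ) = 8 * (n : ℂ) :=
        mul_left_cancel₀ (mul_ne_zero Complex.I_ne_zero hπ) h2
      have h4 : (N : ℤ) = 8 * n := by exact_mod_cast h3
      omega
    · intro h
      obtain ⟨k, rfl⟩ : ∃ k, N = 8 * k := ⟨N / 8, by omega⟩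
      exact ⟨k, by push_cast; ring⟩
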